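/- Let P_s be a sign pattern on n nodes and let Z ⊆ V be a positive signed zero forcing set of P_s. Then for every A ∈ Q_s(P_s) and every real λ > 0, the dimension of the left eigenspace {ν ∈ ℝ^n : ν^T A = λ ν^T} is at most |Z|. In particular, the maximum geometric multiplicity of a positive eigenvalue over all A ∈ Q_s(P_s) is at most the positive signed zero forcing number of P_s (the minimum cardinality of a positive signed zero forcing set). -/

import Mathlib

/-- An entry of a sign pattern: `+`, `-`, `0`, or `?` (unrestricted). -/
inductive SignPatEntry : Type
  | pos | neg | zero | unk
deriving DecidableEq

namespace SignPatEntry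

/-- Sign inversion: `inv(+) = -`, `inv(-) = +`. -/
def inv : SignPatEntry → SignPatEntry
  | pos => neg
  | neg => pos
  | zero => zero
  | unk => unk

/-- Product of signs (used as `s · P(u,v)`). -/
def mul : SignPatEntry → SignPatEntry → SignPatEntry
  | pos, y => y
  | neg, y => y.inv
  | zero, _ => zero
  | unk, _ => unk

end SignPatEntry

/-- A real number matches a sign-pattern entry. -/
def matchesSign : SignPatEntry → ℝ → Prop
  | .pos, a => 0 < a
  | .neg, a => a < 0
  | .zero, a => a = 0
  | .unk, _ => True

/-- The qualitative class of a sign pattern: real matrices whose entries have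
the prescribed signs. -/
def QClass {n : ℕ} (P : Fin n → Fin n → SignPatEntry)
    (A : Matrix (Fin n) (Fin n) ℝ) : Prop :=
  ∀ i j : Fin n, matchesSign (P i j) (A i j)

/-- A configuration of the signing-and-coloring game: a set of black nodes and a
partial marking of nodes with signs. -/
structure Config (n : ℕ) where
  black : Finset (Fin n)
  mark : Fin n → Option SignPatEntry

/-- The set of white out-neighbors of `v` (out-neighbors of `v` are the `u` with
`P u v ≠ 0`). -/
def Wset {n : ℕ} (P : Fin n → Fin n → SignPatEntry) (c : Config n) (v : Fin n) :
    Finset (Fin n) :=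
  Finset.univ.filter (fun u => u ∉ c.black ∧ P u v ≠ SignPatEntry.zero)

/-- One step of the signing and coloring rule, played on the pattern `P`. -/
inductive Step {n : ℕ} (P : Fin n → Fin n → SignPatEntry) : Config n → Config n → Prop
  /-- (1) a pivot node `v` with a single white out-neighbor `u` forces `u` black. -/
  | force1 (c : Config n) (v u : Fin n)
      (hv : v ∈ c.black ∨ P v v ≠ SignPatEntry.unk)
      (hW : Wset P c v = {u}) :
      Step P c ⟨insert u c.black, c.mark⟩
  /-- (2) if all white out-neighbors of a pivot `v` are marked consistently
  (all with `m(u) = P(u,v)` or all with `m(u) = -P(u,v)`), they all become black. -/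
  | force2 (c : Config n) (v : Fin n)
      (hv : v ∈ c.black ∨ P v v ≠ SignPatEntry.unk)
      (hall : (∀ u ∈ Wset P c v, c.mark u = some (P u v)) ∨
              (∀ u ∈ Wset P c v, c.mark u = some (P u v).inv)) :
      Step P c ⟨c.black ∪ Wset P c v, c.mark⟩
  /-- (3) if exactly one white out-neighbor `w` of a pivot `v` is unmarked, at least one
  is marked, and every marked one satisfies `m(u) = s · P(u,v)`, then `w` gets
  marked with `-s · P(w,v)`. -/
  | force3 (c : Config n) (v w : Fin n) (s : SignPatEntry)
      (hv : v ∈ c.black ∨ P v v ≠ SignPatEntry.unk)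
      (hs : s = SignPatEntry.pos ∨ s = SignPatEntry.neg)
      (hw : w ∈ Wset P c v) (hwnone : c.mark w = none)
      (hmarked : ∀ u ∈ Wset P c v, u ≠ w → c.mark u = some (s.mul (P u v)))
      (hex : ∃ u ∈ Wset P c v, u ≠ w) :
      Step P c ⟨c.black, Function.update c.mark w (some (s.inv.mul (P w v)))⟩
  /-- (4) if no white node is marked, an arbitrary white node may be marked `+`. -/
  | force4 (c : Config n) (u : Fin n)
      (hnomark : ∀ x : Fin n, x ∉ c.black → c.mark x = none)
      (hu : u ∉ c.black) :
      Step P c ⟨c.black, Function.update c.mark u (some SignPatEntry.pos)⟩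

/-- The initial configuration: black set `Z`, no marks. -/
def initConfig {n : ℕ} (Z : Finset (Fin n)) : Config n := ⟨Z, fun _ => none⟩

/-- `Z` is a signed zero forcing set of the pattern `P`. -/
def SignedZFS {n : ℕ} (P : Fin n → Fin n → SignPatEntry) (Z : Finset (Fin n)) : Prop :=
  ∃ c : Config n, Relation.ReflTransGen (Step P) (initConfig Z) c ∧ c.black = Finset.univ

/-- The negative looped pattern `P⁻`: off-diagonal as `P`; diagonal `-` if
`P i i ∈ {0,-}`, and `?` if `P i i ∈ {+,?}`. -/
def negLooped {n : ℕ} (P : Fin n → Fin n → SignPatEntry) :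
    Fin n → Fin n → SignPatEntry := fun i j =>
  if i = j then
    (match P i i with
      | SignPatEntry.zero => SignPatEntry.neg
      | SignPatEntry.neg => SignPatEntry.neg
      | _ => SignPatEntry.unk)
  else P i j

/-- The positive looped pattern `P⁺`: off-diagonal as `P`; diagonal `+` if
`P i i ∈ {0,+}`, and `?` if `P i i ∈ {-,?}`. -/
def posLooped {n : ℕ} (P : Fin n → Fin n → SignPatEntry) :
    Fin n → Fin n → SignPatEntry := fun i j =>
  if i = j then
    (match P i i with
      | SignPatEntry.zero => SignPatEntry.pos
      | SignPatEntry.pos => SignPatEntry.pos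
      | _ => SignPatEntry.unk)
  else P i j

/-- The sign of a real number, as a sign-pattern entry. -/
noncomputable def sgnR (x : ℝ) : SignPatEntry :=
  if 0 < x then SignPatEntry.pos else if x < 0 then SignPatEntry.neg else SignPatEntry.zero

/-- The left eigenspace `{ν | νᵀ A = λ νᵀ}` as a submodule of `ℝⁿ`. -/
def leftEigenspace {n : ℕ} (A : Matrix (Fin n) (Fin n) ℝ) (lam : ℝ) :
    Submodule ℝ (Fin n → ℝ) where
  carrier := {ν | Matrix.vecMul ν A = lam • ν}
  zero_mem' := by simp [Matrix.zero_vecMul]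
  add_mem' := by
    intro a b ha hb
    simp only [Set.mem_setOf_eq] at *
    rw [Matrix.add_vecMul, ha, hb, smul_add]
  smul_mem' := by
    intro c a ha
    simp only [Set.mem_setOf_eq] at *
    rw [Matrix.smul_vecMul, ha, smul_comm]

namespace Stmt7Aux

-- The invariant preserved by the signing-and-coloring game: `ν` vanishes on black
-- nodes, and marks are consistent (up to a global sign) with the signs of `ν`.
def Inv {n : ℕ} (ν : Fin n → ℝ) (c : Config n) : Prop :=
  (∀ i ∈ c.black, ν i = 0) ∧ ∃ ε : ℝ, (ε = 1 ∨ ε = -1) ∧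
    ∀ u m, c.mark u = some m →
      (m = SignPatEntry.pos ∧ 0 ≤ ε * ν u) ∨ (m = SignPatEntry.neg ∧ ε * ν u ≤ 0)

lemma white_sum {n : ℕ} {P' : Fin n → Fin n → SignPatEntry}
    {B : Matrix (Fin n) (Fin n) ℝ} (hB : QClass P' B) {ν : Fin n → ℝ}
    (heq : ∀ v, ∑ u, ν u * B u v = 0) {c : Config n}
    (hblack : ∀ i ∈ c.black, ν i = 0) (v : Fin n) :
    ∑ u ∈ Wset P' c v, ν u * B u v = 0 := by
  have h := Finset.sum_subset (Finset.subset_univ (Wset P' c v))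
    (f := fun u => ν u * B u v) ?_
  · rw [h]; exact heq v
  · intro u _ hu
    simp only [Wset, Finset.mem_filter, Finset.mem_univ, true_and, not_and, not_not] at hu
    by_cases hb : u ∈ c.black
    · simp [hblack u hb]
    · have hz : P' u v = SignPatEntry.zero := by
        by_contra hz
        exact hz (hu hb)
      have hBz := hB u v
      rw [hz] at hBz
      simp only [matchesSign] at hBz
      simp [hBz]

lemma step_inv {n : ℕ} {P' : Fin n → Fin n → SignPatEntry}
    (hP' : ∀ i j : Fin n, i ≠ j → P' i j ≠ SignPatEntry.unk)
    {B : Matrix (Fin n) (Fin n) ℝ} (hB : QClass P' B) {ν : Fin n → ℝ}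
    (heq : ∀ v, ∑ u, ν u * B u v = 0) {c c' : Config n}
    (hstep : Step P' c c') (hc : Inv ν c) : Inv ν c' := by
  obtain ⟨hblack, ε, hε, hmark⟩ := hc
  have hε0 : ε ≠ 0 := by rcases hε with h | h <;> rw [h] <;> norm_num
  -- a helper: a node of `Wset` whose pattern entry isn't `unk` has `B u v ≠ 0`
  have hBne : ∀ v u : Fin n, u ∈ Wset P' c v → P' u v ≠ SignPatEntry.unk →
      B u v ≠ 0 := by
    intro v u hu hunk
    simp only [Wset, Finset.mem_filter, Finset.mem_univ, true_and] at hu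
    have hBuv := hB u v
    cases h : P' u v
    · rw [h] at hBuv; exact ne_of_gt hBuv
    · rw [h] at hBuv; exact ne_of_lt hBuv
    · exact absurd h hu.2
    · exact absurd h hunk
  cases hstep with
  | force1 v u hv hW =>
      have hs := white_sum hB heq hblack v
      rw [hW, Finset.sum_singleton] at hs
      have huW : u ∈ Wset P' c v := by rw [hW]; exact Finset.mem_singleton_self u
      have huwhite : u ∉ c.black := by
        simp only [Wset, Finset.mem_filter] at huW; exact huW.2.1
      have hunk : P' u v ≠ SignPatEntry.unk := by
        by_cases huv : u = v
        · subst huv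
          rcases hv with h | h
          · exact absurd h huwhite
          · exact h
        · exact hP' u v huv
      have hu0 : ν u = 0 := by
        rcases mul_eq_zero.1 hs with h | h
        · exact h
        · exact absurd h (hBne v u huW hunk)
      refine ⟨?_, ε, hε, hmark⟩
      intro i hi
      rcases Finset.mem_insert.1 hi with h | h
      · rw [h]; exact hu0
      · exact hblack i h
  | force2 v hv hall =>
      have hs := white_sum hB heq hblack v
      have hall0 : ∀ u ∈ Wset P' c v, ν u = 0 := by
        rcases hall with hall | hall
        · -- all marks equal P' u v : each term ε * (ν u * B u v) is nonneg
          have hnn : ∀ u ∈ Wset P' c v, 0 ≤ ε * (ν u * B u v) := by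
            intro u hu
            have hBuv := hB u v
            rcases hmark u _ (hall u hu) with ⟨hp, hge⟩ | ⟨hp, hle⟩
            · rw [hp] at hBuv; simp only [matchesSign] at hBuv; nlinarith
            · rw [hp] at hBuv; simp only [matchesSign] at hBuv; nlinarith
          have hsum : ∑ u ∈ Wset P' c v, ε * (ν u * B u v) = 0 := by
            rw [← Finset.mul_sum, hs, mul_zero]
          have hz := (Finset.sum_eq_zero_iff_of_nonneg hnn).1 hsum
          intro u hu
          have h0 := hz u hu
          have hunk : P' u v ≠ SignPatEntry.unk := by
            intro h
            rcases hmark u _ (hall u hu) with ⟨hp, _⟩ | ⟨hp, _⟩ <;>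
              rw [h] at hp <;> exact SignPatEntry.noConfusion hp
          rcases mul_eq_zero.1 h0 with h | h
          · exact absurd h hε0
          · rcases mul_eq_zero.1 h with h | h
            · exact h
            · exact absurd h (hBne v u hu hunk)
        · -- all marks equal (P' u v).inv : each term is nonpos
          have hnp : ∀ u ∈ Wset P' c v, ε * (ν u * B u v) ≤ 0 := by
            intro u hu
            have hBuv := hB u v
            rcases hmark u _ (hall u hu) with ⟨hp, hge⟩ | ⟨hp, hle⟩
            · have : P' u v = SignPatEntry.neg := by
                cases h : P' u v <;> rw [h] at hp <;>
                  simp [SignPatEntry.inv] at hp ⊢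
              rw [this] at hBuv; simp only [matchesSign] at hBuv; nlinarith
            · have : P' u v = SignPatEntry.pos := by
                cases h : P' u v <;> rw [h] at hp <;>
                  simp [SignPatEntry.inv] at hp ⊢
              rw [this] at hBuv; simp only [matchesSign] at hBuv; nlinarith
          have hsum : ∑ u ∈ Wset P' c v, ε * (ν u * B u v) = 0 := by
            rw [← Finset.mul_sum, hs, mul_zero]
          have hz := (Finset.sum_eq_zero_iff_of_nonpos hnp).1 hsum
          intro u hu
          have h0 := hz u hu
          have hunk : P' u v ≠ SignPatEntry.unk := by
            intro h
            rcases hmark u _ (hall u hu) with ⟨hp, _⟩ | ⟨hp, _⟩ <;>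
              rw [h] at hp <;> exact SignPatEntry.noConfusion hp
          rcases mul_eq_zero.1 h0 with h | h
          · exact absurd h hε0
          · rcases mul_eq_zero.1 h with h | h
            · exact h
            · exact absurd h (hBne v u hu hunk)
      refine ⟨?_, ε, hε, hmark⟩
      intro i hi
      rcases Finset.mem_union.1 hi with h | h
      · exact hblack i h
      · exact hall0 i h
  | force3 v w s hv hs hw hwnone hmarked hex =>
      have hsum := white_sum hB heq hblack v
      rw [← Finset.sum_erase_add _ _ hw] at hsum
      have hwwhite : w ∉ c.black := by
        simp only [Wset, Finset.mem_filter] at hw; exact hw.2.1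
      have hwz : P' w v ≠ SignPatEntry.zero := by
        simp only [Wset, Finset.mem_filter] at hw; exact hw.2.2
      have hwunk : P' w v ≠ SignPatEntry.unk := by
        by_cases hwv : w = v
        · subst hwv
          rcases hv with h | h
          · exact absurd h hwwhite
          · exact h
        · exact hP' w v hwv
      refine ⟨hblack, ε, hε, ?_⟩
      rcases hs with hsp | hsn
      · -- s = pos : each marked term is nonneg, so ε * ν w * B w v ≤ 0
        subst hsp
        have hnn : ∀ u ∈ (Wset P' c v).erase w, 0 ≤ ε * (ν u * B u v) := by
          intro u hu
          have hune := Finset.ne_of_mem_erase hu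
          have huW := Finset.mem_of_mem_erase hu
          have hm := hmarked u huW hune
          have hBuv := hB u v
          rcases hmark u _ hm with ⟨hp, hge⟩ | ⟨hp, hle⟩
          · have : P' u v = SignPatEntry.pos := by
              cases h : P' u v <;> rw [h] at hp <;>
                simp [SignPatEntry.mul, SignPatEntry.inv] at hp ⊢
            rw [this] at hBuv; simp only [matchesSign] at hBuv; nlinarith
          · have : P' u v = SignPatEntry.neg := by
              cases h : P' u v <;> rw [h] at hp <;>
                simp [SignPatEntry.mul, SignPatEntry.inv] at hp ⊢
            rw [this] at hBuv; simp only [matchesSign] at hBuv; nlinarith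
        have hsle : ε * (ν w * B w v) ≤ 0 := by
          have h1 : 0 ≤ ∑ u ∈ (Wset P' c v).erase w, ε * (ν u * B u v) :=
            Finset.sum_nonneg hnn
          rw [← Finset.mul_sum] at h1
          have h2 : ν w * B w v = -∑ u ∈ (Wset P' c v).erase w, ν u * B u v := by
            linarith
          rw [h2, mul_neg]
          linarith
        intro u m hm
        by_cases huw : u = w
        · subst huw
          simp only [Function.update_self] at hm
          have hBwv := hB u v
          cases hwv : P' u v
          · rw [hwv] at hm hBwv; simp only [matchesSign] at hBwv
            simp only [SignPatEntry.inv, SignPatEntry.mul, Option.some.injEq] at hm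
            right
            refine ⟨hm.symm, ?_⟩
            nlinarith
          · rw [hwv] at hm hBwv; simp only [matchesSign] at hBwv
            simp only [SignPatEntry.inv, SignPatEntry.mul, Option.some.injEq] at hm
            left
            refine ⟨hm.symm, ?_⟩
            nlinarith
          · exact absurd hwv hwz
          · exact absurd hwv hwunk
        · simp only [Function.update_of_ne huw] at hm
          exact hmark u m hm
      · -- s = neg
        subst hsn
        have hnp : ∀ u ∈ (Wset P' c v).erase w, ε * (ν u * B u v) ≤ 0 := by
          intro u hu
          have hune := Finset.ne_of_mem_erase hu
          have huW := Finset.mem_of_mem_erase hu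
          have hm := hmarked u huW hune
          have hBuv := hB u v
          rcases hmark u _ hm with ⟨hp, hge⟩ | ⟨hp, hle⟩
          · have : P' u v = SignPatEntry.neg := by
              cases h : P' u v <;> rw [h] at hp <;>
                simp [SignPatEntry.mul, SignPatEntry.inv] at hp ⊢
            rw [this] at hBuv; simp only [matchesSign] at hBuv; nlinarith
          · have : P' u v = SignPatEntry.pos := by
              cases h : P' u v <;> rw [h] at hp <;>
                simp [SignPatEntry.mul, SignPatEntry.inv] at hp ⊢
            rw [this] at hBuv; simp only [matchesSign] at hBuv; nlinarith
        have hsge : 0 ≤ ε * (ν w * B w v) := by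
          have h1 : ∑ u ∈ (Wset P' c v).erase w, ε * (ν u * B u v) ≤ 0 :=
            Finset.sum_nonpos hnp
          rw [← Finset.mul_sum] at h1
          have h2 : ν w * B w v = -∑ u ∈ (Wset P' c v).erase w, ν u * B u v := by
            linarith
          rw [h2, mul_neg]
          linarith
        intro u m hm
        by_cases huw : u = w
        · subst huw
          simp only [Function.update_self] at hm
          have hBwv := hB u v
          cases hwv : P' u v
          · rw [hwv] at hm hBwv; simp only [matchesSign] at hBwv
            simp only [SignPatEntry.inv, SignPatEntry.mul, Option.some.injEq] at hm
            left
            refine ⟨hm.symm, ?_⟩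
            nlinarith
          · rw [hwv] at hm hBwv; simp only [matchesSign] at hBwv
            simp only [SignPatEntry.inv, SignPatEntry.mul, Option.some.injEq] at hm
            right
            refine ⟨hm.symm, ?_⟩
            nlinarith
          · exact absurd hwv hwz
          · exact absurd hwv hwunk
        · simp only [Function.update_of_ne huw] at hm
          exact hmark u m hm
  | force4 u hnomark hu =>
      refine ⟨hblack, if 0 ≤ ν u then 1 else -1, ?_, ?_⟩
      · split <;> simp
      · intro x m hm
        by_cases hxu : x = u
        · subst hxu
          simp only [Function.update_self] at hm
          left
          refine ⟨(Option.some.injEq _ _ ▸ hm).symm, ?_⟩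
          split
          · next h => simpa using h
          · next h => push_neg at h; nlinarith
        · simp only [Function.update_of_ne hxu] at hm
          by_cases hxb : x ∈ c.black
          · have hx0 := hblack x hxb
            rcases hmark x m hm with ⟨hp, _⟩ | ⟨hp, _⟩
            · left; exact ⟨hp, by rw [hx0]; simp⟩
            · right; exact ⟨hp, by rw [hx0]; simp⟩
          · exact absurd hm (by rw [hnomark x hxb]; simp)

end Stmt7Aux

/-- If `Z` is a positive signed zero forcing set of `P_s` (a signed zero
forcing set of the negative looped pattern `P_s⁻`), then for every `A ∈ Q_s(P_s)` and every
real `λ > 0` the left eigenspace `{ν | νᵀ A = λ νᵀ}` has dimension at most `|Z|`; hence the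
maximum geometric multiplicity of a positive eigenvalue over `Q_s(P_s)` is at most the
positive signed zero forcing number. -/
theorem stmt7 {n : ℕ} (P : Fin n → Fin n → SignPatEntry)
    (hP : ∀ i j : Fin n, i ≠ j → P i j ≠ SignPatEntry.unk)
    (Z : Finset (Fin n)) (hZ : SignedZFS (negLooped P) Z) :
    ∀ A : Matrix (Fin n) (Fin n) ℝ, QClass P A →
      ∀ lam : ℝ, 0 < lam →
        Module.finrank ℝ (leftEigenspace A lam) ≤ Z.card := by
  intro A hA lam hlam
  by_contra hcon
  push_neg at hcon
  classical
  set E := leftEigenspace A lam with hE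
  set f : E →ₗ[ℝ] ({x // x ∈ Z} → ℝ) :=
    (LinearMap.funLeft ℝ ℝ (Subtype.val : {x // x ∈ Z} → Fin n)).comp E.subtype with hf
  have hninj : ¬ Function.Injective f := by
    intro hinj
    have h1 := LinearMap.finrank_le_finrank_of_injective hinj
    rw [Module.finrank_fintype_fun_eq_card, Fintype.card_coe] at h1
    omega
  have hker : LinearMap.ker f ≠ ⊥ := fun h => hninj (LinearMap.ker_eq_bot.mp h)
  obtain ⟨x, hxker, hx0⟩ := Submodule.exists_mem_ne_zero_of_ne_bot hker
  set ν : Fin n → ℝ := (x : Fin n → ℝ) with hν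
  have hν0 : ν ≠ 0 := fun h => hx0 (Subtype.ext h)
  have hZν : ∀ i ∈ Z, ν i = 0 := by
    intro i hi
    have h0 := LinearMap.mem_ker.1 hxker
    have h1 := congrFun h0 ⟨i, hi⟩
    simpa [hf, LinearMap.funLeft] using h1
  have hvm : Matrix.vecMul ν A = lam • ν := x.2
  set B : Matrix (Fin n) (Fin n) ℝ := A - lam • 1 with hBdef
  have hB : QClass (negLooped P) B := by
    intro i j
    by_cases hij : i = j
    · subst hij
      have hAii := hA i i
      have hBii : B i i = A i i - lam := by
        simp [hBdef, Matrix.sub_apply, Matrix.smul_apply, Matrix.one_apply_eq]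
      cases hPi : P i i <;> rw [hPi] at hAii <;>
        simp only [negLooped, if_pos rfl, hPi, matchesSign] at hAii ⊢ <;>
        try trivial
      · show B i i < 0
        rw [hBii]; linarith
      · show B i i < 0
        rw [hBii]; linarith
    · have hBij : B i j = A i j := by
        simp [hBdef, Matrix.sub_apply, Matrix.smul_apply, Matrix.one_apply_ne hij]
      simp only [negLooped, if_neg hij]
      rw [hBij]
      exact hA i j
  have heq : ∀ v, ∑ u, ν u * B u v = 0 := by
    intro v
    have h1 : ∑ u, ν u * A u v = lam * ν v := by
      have h := congrFun hvm v
      simpa [Matrix.vecMul, dotProduct] using h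
    have hBd : ∀ u, B u v = A u v - (if u = v then lam else 0) := by
      intro u
      by_cases huv : u = v
      · subst huv; simp [hBdef, Matrix.one_apply_eq]
      · simp [hBdef, Matrix.one_apply_ne huv, huv]
    calc ∑ u, ν u * B u v
        = ∑ u, (ν u * A u v - (if u = v then lam * ν u else 0)) := by
          refine Finset.sum_congr rfl fun u _ => ?_
          rw [hBd u]
          by_cases huv : u = v <;> simp [huv] <;> ring
      _ = (∑ u, ν u * A u v) - ∑ u, (if u = v then lam * ν u else 0) :=
          Finset.sum_sub_distrib _ _
      _ = 0 := by
          rw [h1, Finset.sum_ite_eq' Finset.univ v (fun u => lam * ν u)]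
          simp
  have hP' : ∀ i j : Fin n, i ≠ j → negLooped P i j ≠ SignPatEntry.unk := by
    intro i j hij
    simpa [negLooped, hij] using hP i j hij
  obtain ⟨c, hrel, hcuniv⟩ := hZ
  have hinit : Stmt7Aux.Inv ν (initConfig Z) :=
    ⟨hZν, 1, Or.inl rfl, fun u m hm => by cases hm⟩
  have hstar : ∀ c' : Config n,
      Relation.ReflTransGen (Step (negLooped P)) (initConfig Z) c' →
      Stmt7Aux.Inv ν c' := by
    intro c' h
    induction h with
    | refl => exact hinit
    | tail _ hbc ih => exact Stmt7Aux.step_inv hP' hB heq hbc ih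
  have hfin : ν = 0 := funext fun i => (hstar c hrel).1 i (hcuniv ▸ Finset.mem_univ i)
  exact hν0 hfin
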